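/- Suppose (αₙ) and (βₙ) are sequences of nonnegative reals with ∑αᵢ = ∞ and ∑αᵢβᵢ < ∞. Then βₙ → 0 if and only if there exists θ > 0 such that for every ε > 0 there exists N such that for all N ≤ n < m, βₙ − βₘ − θ·∑_{i=n}^{m−1} αᵢ ≤ ε. -/

import Mathlib

open Filter Finset

/-- Suppose (αₙ), (βₙ) are nonnegative real sequences with ∑αᵢ = ∞ and
∑αᵢβᵢ < ∞.  Then βₙ → 0 iff there is θ > 0 such that
limsup_N sup{βₙ − βₘ − θ∑_{i=n}^{m−1}αᵢ : N ≤ n < m} ≤ 0, formulated as: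
for every ε > 0 there is N such that βₙ − βₘ − θ∑_{i=n}^{m−1}αᵢ ≤ ε
for all N ≤ n < m. -/
theorem stmt5 (α β : ℕ → ℝ)
    (hα : ∀ n, 0 ≤ α n) (hβ : ∀ n, 0 ≤ β n)
    (hdiv : Tendsto (fun n => ∑ i ∈ Finset.range n, α i) atTop atTop)
    (hsum : Summable (fun i => α i * β i)) :
    Tendsto β atTop (nhds 0) ↔
      ∃ θ : ℝ, 0 < θ ∧ ∀ ε : ℝ, 0 < ε → ∃ N : ℕ, ∀ n m : ℕ, N ≤ n → n < m →
        β n - β m - θ * ∑ i ∈ Finset.Ico n m, α i ≤ ε := by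
  constructor
  · intro h
    refine ⟨1, one_pos, fun ε hε => ?_⟩
    obtain ⟨N, hN⟩ := Metric.tendsto_atTop.mp h ε hε
    refine ⟨N, fun n m hn hnm => ?_⟩
    have h1 : β n < ε := by
      have := hN n hn
      rwa [Real.dist_eq, sub_zero, abs_of_nonneg (hβ n)] at this
    have h2 : 0 ≤ β m := hβ m
    have h3 : 0 ≤ ∑ i ∈ Finset.Ico n m, α i :=
      Finset.sum_nonneg fun i _ => hα i
    nlinarith
  · rintro ⟨θ, hθ, hcond⟩
    rw [Metric.tendsto_atTop]
    intro ε hε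
    set ε' := ε / 4 with hε'def
    have hε'pos : 0 < ε' := by positivity
    obtain ⟨N, hN⟩ := hcond ε' hε'pos
    -- infinitely many small β
    have hinf : ∀ k : ℕ, ∃ m, k ≤ m ∧ β m < ε' := by
      by_contra hcon
      push_neg at hcon
      obtain ⟨k, hk⟩ := hcon
      have hbound : ∀ n : ℕ, ∑ i ∈ Finset.range n, α i ≤
          ∑ i ∈ Finset.range k, α i + (∑' i, α i * β i) / ε' := by
        intro n
        rcases le_or_gt n k with hnk | hkn
        · have h1 : ∑ i ∈ Finset.range n, α i ≤ ∑ i ∈ Finset.range k, α i :=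
            Finset.sum_le_sum_of_subset_of_nonneg
              (Finset.range_subset_range.mpr hnk) (fun i _ _ => hα i)
          have h2 : 0 ≤ (∑' i, α i * β i) / ε' := by
            have : 0 ≤ ∑' i, α i * β i := tsum_nonneg (fun i => mul_nonneg (hα i) (hβ i))
            positivity
          linarith
        · have hsplit : ∑ i ∈ Finset.range n, α i =
              ∑ i ∈ Finset.range k, α i + ∑ i ∈ Finset.Ico k n, α i := by
            rw [Finset.range_eq_Ico,
              ← Finset.sum_Ico_consecutive α (Nat.zero_le k) hkn.le, ← Finset.range_eq_Ico]
          have h3 : ∑ i ∈ Finset.Ico k n, α i ≤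
              (∑ i ∈ Finset.Ico k n, α i * β i) / ε' := by
            rw [le_div_iff₀ hε'pos, Finset.sum_mul]
            refine Finset.sum_le_sum fun i hi => ?_
            have hki : k ≤ i := (Finset.mem_Ico.mp hi).1
            have := hk i hki
            nlinarith [hα i]
          have h4 : ∑ i ∈ Finset.Ico k n, α i * β i ≤ ∑' i, α i * β i :=
            Summable.sum_le_tsum _ (fun i _ => mul_nonneg (hα i) (hβ i)) hsum
          have h5 : (∑ i ∈ Finset.Ico k n, α i * β i) / ε' ≤
              (∑' i, α i * β i) / ε' := by gcongr
          rw [hsplit]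
          linarith
      obtain ⟨n, hn⟩ := (hdiv.eventually_ge_atTop
        (∑ i ∈ Finset.range k, α i + (∑' i, α i * β i) / ε' + 1)).exists
      have := hbound n
      linarith
    -- tail vanishing
    obtain ⟨s, hs⟩ := summable_iff_vanishing.mp hsum
      (Metric.ball 0 (ε' * ε' / θ)) (Metric.ball_mem_nhds 0 (by positivity))
    set M := (s.sup id) + 1 with hMdef
    refine ⟨max N M, fun n hn => ?_⟩
    have hnN : N ≤ n := le_trans (le_max_left _ _) hn
    have hnM : M ≤ n := le_trans (le_max_right _ _) hn
    have hdist : ∀ x : ℝ, 0 ≤ x → x < ε → dist x 0 < ε := by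
      intro x hx hxe
      rwa [Real.dist_eq, sub_zero, abs_of_nonneg hx]
    rcases lt_or_ge (β n) ε' with hsmall | hbig
    · exact hdist _ (hβ n) (by linarith)
    · obtain ⟨m₀, hm₀⟩ := hinf (n + 1)
      have hex : ∃ m, n < m ∧ β m < ε' := ⟨m₀, hm₀.1, hm₀.2⟩
      set m := Nat.find hex with hmdef
      obtain ⟨hnm, hβm⟩ := Nat.find_spec hex
      have hmin : ∀ i, n < i → i < m → ε' ≤ β i := by
        intro i hni him
        by_contra hlt
        push_neg at hlt
        exact Nat.find_min hex him ⟨hni, hlt⟩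
      have hall : ∀ i ∈ Finset.Ico n m, ε' ≤ β i := by
        intro i hi
        obtain ⟨h1, h2⟩ := Finset.mem_Ico.mp hi
        rcases eq_or_lt_of_le h1 with rfl | h
        · exact hbig
        · exact hmin i h h2
      have hdisj : Disjoint (Finset.Ico n m) s := by
        refine Finset.disjoint_left.mpr fun i hi his => ?_
        have h1 : n ≤ i := (Finset.mem_Ico.mp hi).1
        have h2 : i ≤ s.sup id := Finset.le_sup (f := id) his
        omega
      have htail : ∑ i ∈ Finset.Ico n m, α i * β i < ε' * ε' / θ := by
        have := hs (Finset.Ico n m) hdisj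
        rw [Metric.mem_ball, Real.dist_eq, sub_zero] at this
        exact lt_of_le_of_lt (le_abs_self _) this
      have hsumα : ∑ i ∈ Finset.Ico n m, α i < ε' / θ := by
        have h3 : ε' * ∑ i ∈ Finset.Ico n m, α i ≤
            ∑ i ∈ Finset.Ico n m, α i * β i := by
          rw [Finset.mul_sum]
          refine Finset.sum_le_sum fun i hi => ?_
          have := hall i hi
          nlinarith [hα i]
        have : ε' * ∑ i ∈ Finset.Ico n m, α i < ε' * ε' / θ := lt_of_le_of_lt h3 htail
        rw [div_eq_mul_inv, mul_assoc] at this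
        calc ∑ i ∈ Finset.Ico n m, α i
            = ε'⁻¹ * (ε' * ∑ i ∈ Finset.Ico n m, α i) := by
              field_simp
          _ < ε'⁻¹ * (ε' * (ε' * θ⁻¹)) := by
              rw [div_eq_mul_inv] at *
              exact mul_lt_mul_of_pos_left (by linarith) (by positivity)
          _ = ε' / θ := by field_simp
      have hcnd := hN n m hnN hnm
      have hθs : θ * ∑ i ∈ Finset.Ico n m, α i < ε' := by
        have := mul_lt_mul_of_pos_left hsumα hθ
        rwa [mul_div_cancel₀ _ (ne_of_gt hθ)] at this
      have : β n < ε := by linarith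
      exact hdist _ (hβ n) this
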